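/- Let s ≥ 2 be an integer and let I, J ∈ [n]^s be two strictly increasing vectors of indices such that I_i ≠ J_i for all 1 ≤ i ≤ s. Then there exist two distinct indices i ≠ j in [s] such that the value I_i does not appear among the coordinates of J, and the value J_j does not appear among the coordinates of I. -/

import Mathlib

private lemma aux_range {n s : ℕ} (I J : Fin s → Fin n) (hI : StrictMono I)
    (hJ : StrictMono J) (hs : 1 ≤ s) (hne : ∀ i, I i ≠ J i) :
    ∃ j, ∀ l, I l ≠ J j := by
  by_contra h
  push_neg at h
  have hsub : Set.range J ⊆ Set.range I := by
    rintro x ⟨j, rfl⟩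
    obtain ⟨l, hl⟩ := h j
    exact ⟨l, hl⟩
  have hr : Set.range J = Set.range I := by
    have h1 : Finset.image J Finset.univ ⊆ Finset.image I Finset.univ := by
      intro x hx
      simp only [Finset.mem_image] at hx ⊢
      obtain ⟨j, -, rfl⟩ := hx
      obtain ⟨l, hl⟩ := h j
      exact ⟨l, Finset.mem_univ l, hl⟩
    have h2 : (Finset.image I Finset.univ).card ≤ (Finset.image J Finset.univ).card := by
      rw [Finset.card_image_of_injective _ hI.injective,
        Finset.card_image_of_injective _ hJ.injective]
    have h3 := Finset.eq_of_subset_of_card_le h1 h2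
    have := congrArg (fun t : Finset (Fin n) => (t : Set (Fin n))) h3
    simpa using this
  have heq : J = I := (hJ.range_inj hI).mp hr
  exact hne ⟨0, hs⟩ (congrFun heq ⟨0, hs⟩).symm

private lemma main_aux {n s : ℕ} (hs : 2 ≤ s)
    (I J : Fin s → Fin n) (hI : StrictMono I) (hJ : StrictMono J)
    (hne : ∀ i, I i ≠ J i)
    (hlast : J ⟨s-1, by omega⟩ < I ⟨s-1, by omega⟩) :
    ∃ i j : Fin s, i ≠ j ∧ (∀ l, J l ≠ I i) ∧ (∀ l, I l ≠ J j) := by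
  set last : Fin s := ⟨s-1, by omega⟩ with hlastdef
  set zero : Fin s := ⟨0, by omega⟩ with hzerodef
  have hz_ne : zero ≠ last := by
    apply Fin.ne_of_val_ne
    simp only [hlastdef, hzerodef]
    omega
  have hle_last : ∀ l : Fin s, l ≤ last := by
    intro l
    rw [Fin.le_def]
    have := l.isLt
    simp only [hlastdef]
    omega
  have hge_zero : ∀ l : Fin s, zero ≤ l := by
    intro l
    rw [Fin.le_def]
    simp [hzerodef]
  have hIlast : ∀ l, J l ≠ I last := fun l =>
    ne_of_lt (lt_of_le_of_lt (hJ.monotone (hle_last l)) hlast)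
  by_cases h0 : J zero < I zero
  · refine ⟨last, zero, hz_ne.symm, hIlast, fun l => ?_⟩
    exact (ne_of_lt (lt_of_lt_of_le h0 (hI.monotone (hge_zero l)))).symm
  · have h0' : I zero < J zero :=
      lt_of_le_of_ne (not_lt.mp h0) (hne zero)
    have hIzero : ∀ l, J l ≠ I zero := fun l =>
      (ne_of_lt (lt_of_lt_of_le h0' (hJ.monotone (hge_zero l)))).symm
    obtain ⟨j, hj⟩ := aux_range I J hI hJ (by omega) hne
    by_cases hj' : j = last
    · exact ⟨zero, j, fun h => hz_ne (h.trans hj'), hIzero, hj⟩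
    · exact ⟨last, j, fun h => hj' h.symm, hIlast, hj⟩

theorem exists_unshared_coords {n s : ℕ} (hs : 2 ≤ s)
    (I J : Fin s → Fin n) (hI : StrictMono I) (hJ : StrictMono J)
    (hne : ∀ i, I i ≠ J i) :
    ∃ i j : Fin s, i ≠ j ∧ (∀ l, J l ≠ I i) ∧ (∀ l, I l ≠ J j) := by
  rcases lt_or_gt_of_ne (hne ⟨s-1, by omega⟩) with h | h
  · obtain ⟨i, j, hij, h1, h2⟩ := main_aux hs J I hJ hI (fun i => (hne i).symm) h
    exact ⟨j, i, hij.symm, h2, h1⟩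
  · exact main_aux hs I J hI hJ hne h
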